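/- Let g ≥ 2 be an integer, m a natural number, and let f ∈ ℂ(z₁,z₂) be a finite sum f = Σₙ fₙ with fₙ ∈ V₂^{(g,m,n)} for each n. If f has no pole along Δ₂ = 0, i.e. f·Δ₁^{2g−2} lies in the polynomial ring ℂ[z₁,z₂], then f itself lies in ℂ[z₁,z₂] and its degree in z₁ is at most m − 6(g−1); in particular f = 0 whenever m < 6(g−1). -/

import Mathlib

open MvPolynomial

set_option synthInstance.maxHeartbeats 1000000
set_option maxHeartbeats 2000000

noncomputable section

/-- `K = ℂ(z₁,z₂)`, the field of rational functions in two variables over `ℂ`. -/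
abbrev K2 : Type := FractionRing (MvPolynomial (Fin 2) ℂ)

/-- The rational function `z₁`. -/
def z1 : K2 := algebraMap (MvPolynomial (Fin 2) ℂ) K2 (X 0)

/-- The rational function `z₂`. -/
def z2 : K2 := algebraMap (MvPolynomial (Fin 2) ℂ) K2 (X 1)

/-- The conifold discriminant `Δ₁ = (1−432z₁)³ − 27·(432z₁)³·z₂`. -/
def Δ1 : K2 := (1 - 432 * z1) ^ 3 - 27 * (432 * z1) ^ 3 * z2

/-- The conifold discriminant `Δ₂ = 1 + 27z₂`. -/
def Δ2 : K2 := 1 + 27 * z2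

/-- `V₀^{(g,m,n)}`: the ℂ-span of `z₁^k (1/432−z₁)^{m−k} z₂^n (Δ₁Δ₂)^{−(2g−2)}` for `0 ≤ k ≤ m`. -/
def V0 (g : ℤ) (m n : ℕ) : Submodule ℂ K2 :=
  Submodule.span ℂ
    {f : K2 | ∃ k : ℕ, k ≤ m ∧
      f = z1 ^ k * (1 / 432 - z1) ^ (m - k) * z2 ^ n * (Δ1 * Δ2) ^ (-(2 * g - 2))}

/-- `V₁^{(g,m,n)} = {f ∈ V₀^{(g,m,n)} : ι(f) ∈ V₀^{(g,m,n)}}`. -/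
def V1 (ι : K2 →ₐ[ℂ] K2) (g : ℤ) (m n : ℕ) : Submodule ℂ K2 :=
  V0 g m n ⊓ (V0 g m n).comap ι.toLinearMap

/-- `V₂^{(g,m,n)} = {f ∈ V₁^{(g,m,n)} : ι(f) = (−1)^{g−1} f}`. -/
def V2 (ι : K2 →ₐ[ℂ] K2) (g : ℤ) (m n : ℕ) : Submodule ℂ K2 :=
  V1 ι g m n ⊓
    LinearMap.ker (ι.toLinearMap - ((-1 : ℂ) ^ (g - 1)) • (LinearMap.id : K2 →ₗ[ℂ] K2))

namespace NoPoleAux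

abbrev Rp : Type := MvPolynomial (Fin 2) ℂ
abbrev A1 : Type := MvPolynomial (Fin 1) ℂ

/-- The polynomial representing `Δ1`. -/
def d1 : Rp := (1 - 432 * X 0) ^ 3 - 27 * (432 * X 0) ^ 3 * X 1

/-- The polynomial representing `Δ2`. -/
def d2 : Rp := 1 + 27 * X 1

abbrev φ : Rp →+* K2 := algebraMap Rp K2

lemma phi_inj : Function.Injective φ := IsFractionRing.injective _ _

lemma phi_C (c : ℂ) : φ (C c) = algebraMap ℂ K2 c := by
  rw [IsScalarTower.algebraMap_apply ℂ Rp K2, MvPolynomial.algebraMap_eq]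

lemma alg_c432 : algebraMap ℂ K2 (1 / 432) = (1 / 432 : K2) := by
  rw [map_div₀, map_one, map_ofNat]

lemma phi_d1 : φ d1 = Δ1 := by
  simp [d1, Δ1, z1, z2, map_sub, map_mul, map_pow, map_one, map_ofNat]

lemma phi_d2 : φ d2 = Δ2 := by
  simp [d2, Δ2, z2, map_add, map_mul, map_one, map_ofNat]

lemma phi_one_sub : φ (1 - 432 * X 0) = 1 - 432 * z1 := by
  simp [z1, map_sub, map_mul, map_one, map_ofNat]

lemma d1_ne : (d1 : Rp) ≠ 0 := by
  intro h
  have := congrArg (eval (fun _ => (0:ℂ))) h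
  simp [d1] at this

lemma d2_ne : (d2 : Rp) ≠ 0 := by
  intro h
  have := congrArg (eval (fun _ => (0:ℂ))) h
  simp [d2] at this

lemma one_sub_ne : ((1 - 432 * X 0 : Rp)) ≠ 0 := by
  intro h
  have := congrArg (eval (fun _ => (0:ℂ))) h
  simp at this

lemma phi_ne {x : Rp} (hx : x ≠ 0) : φ x ≠ 0 :=
  fun h => hx (phi_inj (h.trans (map_zero φ).symm))

lemma Δ1_ne : Δ1 ≠ 0 := by rw [← phi_d1]; exact phi_ne d1_ne

lemma Δ2_ne : Δ2 ≠ 0 := by rw [← phi_d2]; exact phi_ne d2_ne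

lemma one_sub_z1_ne : (1 - 432 * z1 : K2) ≠ 0 := by
  rw [← phi_one_sub]; exact phi_ne one_sub_ne

lemma prime_transfer {A B : Type*} [CommMonoidWithZero A] [CommMonoidWithZero B]
    (e : A ≃* B) {p : A} (h : Prime (e p)) : Prime p := (MulEquiv.prime_iff e).mp h

lemma prime_X0' : Prime (X 0 : A1) := by
  apply prime_transfer (finSuccEquiv ℂ 0).toMulEquiv
  show Prime ((finSuccEquiv ℂ 0) (X 0))
  rw [finSuccEquiv_X_zero]
  exact Polynomial.prime_X

lemma prime_X0 : Prime (X 0 : Rp) := by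
  apply prime_transfer (finSuccEquiv ℂ 1).toMulEquiv
  show Prime ((finSuccEquiv ℂ 1) (X 0))
  rw [finSuccEquiv_X_zero]
  exact Polynomial.prime_X

lemma e0_X1 : finSuccEquiv ℂ 1 (X (1 : Fin 2)) = Polynomial.C (X 0 : A1) := by
  rw [show (X (1 : Fin 2) : Rp) = X (Fin.succ (0 : Fin 1)) from rfl]
  exact finSuccEquiv_X_succ

lemma prime_X1 : Prime (X 1 : Rp) := by
  apply prime_transfer (finSuccEquiv ℂ 1).toMulEquiv
  show Prime ((finSuccEquiv ℂ 1) (X 1))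
  rw [e0_X1, Polynomial.prime_C_iff]
  exact prime_X0'

lemma isUnit_27P : IsUnit (27 : Polynomial A1) := by
  apply IsUnit.of_mul_eq_one (Polynomial.C (MvPolynomial.C (1/27 : ℂ)))
  have h27 : (27 : Polynomial A1) = Polynomial.C (MvPolynomial.C (27 : ℂ)) := by
    simp [map_ofNat]
  rw [h27, ← Polynomial.C_mul, ← MvPolynomial.C_mul]
  norm_num

lemma prime_lin : Prime (1 + 27 * Polynomial.X : Polynomial A1) := by
  have h := Polynomial.prime_X_sub_C (R := A1) (MvPolynomial.C (-1/27 : ℂ))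
  have hass : Associated (Polynomial.X - Polynomial.C (MvPolynomial.C (-1/27 : ℂ)))
      (1 + 27 * Polynomial.X : Polynomial A1) := by
    refine ⟨isUnit_27P.unit, ?_⟩
    rw [IsUnit.unit_spec]
    have h27 : (27 : Polynomial A1) = Polynomial.C (MvPolynomial.C (27 : ℂ)) := by
      simp [map_ofNat]
    rw [sub_mul, h27, ← Polynomial.C_mul, ← MvPolynomial.C_mul]
    norm_num
    ring
  exact hass.prime h

lemma prime_d2 : Prime d2 := by
  apply prime_transfer
    ((renameEquiv ℂ (Equiv.swap (0 : Fin 2) 1)).trans (finSuccEquiv ℂ 1)).toMulEquiv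
  show Prime ((finSuccEquiv ℂ 1) ((rename (Equiv.swap (0 : Fin 2) 1)) d2))
  have hsw : ((rename (Equiv.swap (0 : Fin 2) 1)) d2 : Rp) = 1 + 27 * X 0 := by
    have h10 : (Equiv.swap (0 : Fin 2) 1) 1 = 0 := by decide
    simp [d2, rename_X, h10, map_add, map_mul, map_one, map_ofNat]
  rw [hsw]
  have : ((finSuccEquiv ℂ 1) (1 + 27 * X 0) : Polynomial A1) = 1 + 27 * Polynomial.X := by
    simp [map_add, map_mul, map_one, map_ofNat, finSuccEquiv_X_zero]
  rw [this]
  exact prime_lin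

lemma not_dvd_of_eval {p q : Rp} (v : Fin 2 → ℂ) (hq : eval v q = 0) (hp : eval v p ≠ 0) :
    ¬ q ∣ p := by
  rintro ⟨c, rfl⟩
  apply hp
  rw [map_mul, hq, zero_mul]

lemma isRelPrime_of_prime_not_dvd {p q : Rp} (hq : Prime q) (h : ¬ q ∣ p) : IsRelPrime p q := by
  intro d hdp hdq
  obtain ⟨c, hc⟩ := hdq
  rcases hq.irreducible.isUnit_or_isUnit hc with h1 | h2
  · exact h1
  · exfalso
    obtain ⟨u, rfl⟩ := h2
    exact h (dvd_trans ⟨(↑(u⁻¹) : Rp), by rw [hc]; simp [mul_assoc]⟩ hdp)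

lemma isUnit_C_ne {c : ℂ} (hc : c ≠ 0) : IsUnit (C c : Rp) := by
  apply IsUnit.of_mul_eq_one (C c⁻¹)
  rw [← C_mul, mul_inv_cancel₀ hc, C_1]

lemma isUnit_432 : IsUnit (432 : Rp) := by
  have : (432 : Rp) = C (432 : ℂ) := by simp [map_ofNat]
  rw [this]; exact isUnit_C_ne (by norm_num)

lemma isUnit_27R : IsUnit (27 : Rp) := by
  have : (27 : Rp) = C (27 : ℂ) := by simp [map_ofNat]
  rw [this]; exact isUnit_C_ne (by norm_num)

lemma rX0 : IsRelPrime d1 (X 0 : Rp) :=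
  isRelPrime_of_prime_not_dvd prime_X0
    (not_dvd_of_eval (fun _ => 0) (by simp) (by simp [d1]))

lemma rX1 : IsRelPrime d1 (X 1 : Rp) :=
  isRelPrime_of_prime_not_dvd prime_X1
    (not_dvd_of_eval (fun _ => 0) (by simp) (by simp [d1]))

lemma rd2 : IsRelPrime d1 d2 := by
  apply isRelPrime_of_prime_not_dvd prime_d2
  apply not_dvd_of_eval ![0, -1/27]
  · simp [d2]; norm_num
  · simp [d1]

lemma rsub : IsRelPrime d1 (1 - 432 * X 0 : Rp) := by
  intro d hd hdl
  have hcube : d ∣ (1 - 432 * X 0 : Rp) ^ 3 := dvd_pow hdl three_ne_zero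
  have hx : d ∣ (27 * (432 * X 0) ^ 3 * X 1 : Rp) := by
    have h : (27 * (432 * X 0) ^ 3 * X 1 : Rp) = (1 - 432 * X 0) ^ 3 - d1 := by
      rw [d1]; ring
    rw [h]
    exact dvd_sub hcube hd
  exact ((isUnit_27R.isRelPrime_right.mul_right
    (((isUnit_432.isRelPrime_right).mul_right rX0).pow_right)).mul_right rX1) hd hx

lemma e0_d1 : finSuccEquiv ℂ 1 d1 =
    Polynomial.C (-(432 ^ 3 : A1) * (1 + 27 * X 0)) * Polynomial.X ^ 3 +
    Polynomial.C (3 * 432 ^ 2 : A1) * Polynomial.X ^ 2 +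
    Polynomial.C (-(3 * 432) : A1) * Polynomial.X + Polynomial.C (1 : A1) := by
  rw [d1]
  simp [map_sub, map_mul, map_pow, map_one, map_ofNat, map_add, map_neg,
    finSuccEquiv_X_zero, e0_X1]
  ring

lemma e0_d1_natDegree : (finSuccEquiv ℂ 1 d1).natDegree = 3 := by
  rw [e0_d1]
  apply Polynomial.natDegree_cubic
  intro h
  have := congrArg (eval (fun _ => (0 : ℂ))) h
  simp [map_ofNat] at this

lemma e0_d2 : finSuccEquiv ℂ 1 d2 = Polynomial.C (1 + 27 * X 0 : A1) := by
  rw [d2]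
  simp [map_add, map_mul, map_one, map_ofNat, e0_X1]

/-- The submodule of polynomials of degree at most `m` in the first variable. -/
def M0 (m : ℕ) : Submodule ℂ Rp where
  carrier := {q | degreeOf 0 q ≤ m}
  add_mem' := fun ha hb => le_trans (degreeOf_add_le _ _ _) (max_le ha hb)
  zero_mem' := by simp
  smul_mem' := fun c q hq => by
    simp only [Set.mem_setOf_eq, smul_eq_C_mul]
    calc degreeOf 0 (C c * q) ≤ degreeOf 0 (C c : Rp) + degreeOf 0 q := degreeOf_mul_le _ _ _
    _ ≤ m := by simpa using hq

def MK (m : ℕ) (g : ℤ) : Submodule ℂ K2 :=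
  ((M0 m).map (IsScalarTower.toAlgHom ℂ Rp K2).toLinearMap).comap
    (LinearMap.mulLeft ℂ ((Δ1 * Δ2 : K2) ^ (2 * g - 2 : ℤ)))

lemma V0_le_MK (g : ℤ) (m n : ℕ) : V0 g m n ≤ MK m g := by
  rw [V0, Submodule.span_le]
  rintro h ⟨k, hk, rfl⟩
  have hne : (Δ1 * Δ2 : K2) ≠ 0 := mul_ne_zero Δ1_ne Δ2_ne
  simp only [MK, SetLike.mem_coe, Submodule.mem_comap, LinearMap.mulLeft_apply,
    Submodule.mem_map]
  refine ⟨X 0 ^ k * (C (1/432 : ℂ) - X 0) ^ (m - k) * X 1 ^ n, ?_, ?_⟩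
  · -- degree bound
    show degreeOf 0 _ ≤ m
    have hX0 : degreeOf 0 (X 0 ^ k : Rp) ≤ k := by
      refine le_trans (degreeOf_pow_le _ _ _) ?_
      simp [degreeOf_X]
    have hCX : degreeOf 0 ((C (1/432:ℂ) - X 0) ^ (m - k) : Rp) ≤ m - k := by
      refine le_trans (degreeOf_pow_le _ _ _) ?_
      have hc : (C (1/432:ℂ) - X 0 : Rp) = C (1/432:ℂ) + C (-1 : ℂ) * X 0 := by
        simp only [map_neg, C_1]; ring
      have h1' : degreeOf 0 (C (-1:ℂ) * X 0 : Rp) ≤ 1 :=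
        le_trans (degreeOf_mul_le _ _ _) (by rw [degreeOf_C, degreeOf_X]; norm_num)
      have : degreeOf 0 (C (1/432:ℂ) - X 0 : Rp) ≤ 1 := by
        rw [hc]
        exact le_trans (degreeOf_add_le _ _ _)
          (max_le (by rw [degreeOf_C]; exact Nat.zero_le 1) h1')
      calc (m - k) * degreeOf 0 (C (1/432:ℂ) - X 0 : Rp) ≤ (m - k) * 1 :=
            Nat.mul_le_mul_left _ this
        _ = m - k := by ring
    have hX1 : degreeOf 0 (X 1 ^ n : Rp) ≤ 0 := by
      refine le_trans (degreeOf_pow_le _ _ _) ?_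
      simp [degreeOf_X]
    calc degreeOf 0 (X 0 ^ k * (C (1/432:ℂ) - X 0) ^ (m-k) * X 1 ^ n : Rp)
        ≤ degreeOf 0 (X 0 ^ k * (C (1/432:ℂ) - X 0) ^ (m-k) : Rp)
            + degreeOf 0 (X 1 ^ n : Rp) := degreeOf_mul_le _ _ _
      _ ≤ (degreeOf 0 (X 0 ^ k : Rp) + degreeOf 0 ((C (1/432:ℂ) - X 0) ^ (m-k) : Rp))
            + degreeOf 0 (X 1 ^ n : Rp) := by gcongr; exact degreeOf_mul_le _ _ _
      _ ≤ (k + (m - k)) + 0 := by gcongr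
      _ ≤ m := by omega
  · -- value
    have hφ : φ (X 0 ^ k * (C (1/432:ℂ) - X 0) ^ (m - k) * X 1 ^ n)
        = z1 ^ k * (1/432 - z1) ^ (m - k) * z2 ^ n := by
      rw [map_mul, map_mul, map_pow, map_pow, map_pow, map_sub, phi_C, alg_c432]
      rfl
    have hcan : (Δ1 * Δ2 : K2) ^ (2 * g - 2 : ℤ) * (Δ1 * Δ2) ^ (-(2 * g - 2) : ℤ) = 1 := by
      rw [← zpow_add₀ hne]
      simp
    have hval : φ (X 0 ^ k * (C (1/432:ℂ) - X 0) ^ (m - k) * X 1 ^ n)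
        = (Δ1 * Δ2 : K2) ^ (2 * g - 2 : ℤ)
          * (z1 ^ k * (1/432 - z1) ^ (m-k) * z2 ^ n * (Δ1 * Δ2) ^ (-(2 * g - 2) : ℤ)) := by
      rw [hφ]
      calc z1 ^ k * (1/432 - z1) ^ (m-k) * z2 ^ n
          = (z1 ^ k * (1/432 - z1) ^ (m-k) * z2 ^ n)
              * ((Δ1 * Δ2 : K2) ^ (2 * g - 2 : ℤ) * (Δ1 * Δ2) ^ (-(2 * g - 2) : ℤ)) := by
            rw [hcan, mul_one]
        _ = (Δ1 * Δ2 : K2) ^ (2 * g - 2 : ℤ)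
              * (z1 ^ k * (1/432 - z1) ^ (m-k) * z2 ^ n
                * (Δ1 * Δ2) ^ (-(2 * g - 2) : ℤ)) := by ring
    exact hval

lemma stepA (g : ℤ) (m : ℕ) (f : K2) (F : ℕ → K2) (N : ℕ)
    (hF : ∀ n : ℕ, F n ∈ V0 g m n)
    (hsum : f = ∑ n ∈ Finset.range N, F n) :
    ∃ q : Rp, degreeOf 0 q ≤ m ∧
      f * (Δ1 * Δ2) ^ (2 * g - 2 : ℤ) = φ q := by
  have hf : f ∈ MK m g := by
    rw [hsum]
    exact Submodule.sum_mem _ (fun n _ => V0_le_MK g m n (hF n))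
  rw [MK, Submodule.mem_comap] at hf
  obtain ⟨q, hq, heq⟩ := Submodule.mem_map.mp hf
  have heq' : φ q = (Δ1 * Δ2 : K2) ^ (2 * g - 2 : ℤ) * f := heq
  exact ⟨q, hq, by rw [mul_comm]; exact heq'.symm⟩

lemma denom_clear (ι : K2 →ₐ[ℂ] K2) (h1 : ι z1 = 1 / 432 - z1)
    (h2 : ι z2 = -((432 * z1) ^ 3 * z2) / (1 - 432 * z1) ^ 3) (p : Rp) :
    ∃ (T : Rp) (d : ℕ), ι (φ p) * (1 - 432 * z1) ^ (3 * d) = φ T := by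
  induction p using MvPolynomial.induction_on with
  | C a =>
      refine ⟨C a, 0, ?_⟩
      rw [Nat.mul_zero, pow_zero, mul_one, phi_C, AlgHom.commutes]
  | add p q hp hq =>
      obtain ⟨T1, e1, hT1⟩ := hp
      obtain ⟨T2, e2, hT2⟩ := hq
      refine ⟨T1 * (1 - 432 * X 0) ^ (3 * e2) + T2 * (1 - 432 * X 0) ^ (3 * e1), e1 + e2, ?_⟩
      calc ι (φ (p + q)) * (1 - 432 * z1) ^ (3 * (e1 + e2))
          = (ι (φ p) * (1 - 432 * z1) ^ (3 * e1)) * (1 - 432 * z1) ^ (3 * e2)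
            + (ι (φ q) * (1 - 432 * z1) ^ (3 * e2)) * (1 - 432 * z1) ^ (3 * e1) := by
              rw [map_add, map_add]; ring
        _ = φ T1 * (1 - 432 * z1) ^ (3 * e2) + φ T2 * (1 - 432 * z1) ^ (3 * e1) := by
              rw [hT1, hT2]
        _ = φ (T1 * (1 - 432 * X 0) ^ (3 * e2) + T2 * (1 - 432 * X 0) ^ (3 * e1)) := by
              rw [map_add, map_mul, map_mul, map_pow, map_pow, phi_one_sub]
  | mul_X p i hp =>
      obtain ⟨T, e, hT⟩ := hp
      fin_cases i
      · refine ⟨T * (C (1/432 : ℂ) - X 0), e, ?_⟩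
        show ι (φ (p * X 0)) * (1 - 432 * z1) ^ (3 * e) = φ (T * (C (1/432 : ℂ) - X 0))
        have hx : ι (φ (p * X 0)) = ι (φ p) * (1/432 - z1) := by
          rw [map_mul, map_mul, show (φ (X 0) : K2) = z1 from rfl, h1]
        rw [hx]
        calc ι (φ p) * (1/432 - z1) * (1 - 432 * z1) ^ (3 * e)
            = (ι (φ p) * (1 - 432 * z1) ^ (3 * e)) * (1/432 - z1) := by ring
          _ = φ T * (1/432 - z1) := by rw [hT]
          _ = φ (T * (C (1/432 : ℂ) - X 0)) := by
              rw [map_mul, map_sub, phi_C, alg_c432]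
              rfl
      · refine ⟨T * (-((432 * X 0) ^ 3 * X 1)), e + 1, ?_⟩
        show ι (φ (p * X 1)) * (1 - 432 * z1) ^ (3 * (e + 1))
            = φ (T * (-((432 * X 0) ^ 3 * X 1)))
        have hx : ι (φ (p * X 1)) = ι (φ p) * (-((432 * z1) ^ 3 * z2) / (1 - 432 * z1) ^ 3) := by
          rw [map_mul, map_mul, show (φ (X 1) : K2) = z2 from rfl, h2]
        rw [hx]
        have hcancel : -((432 * z1) ^ 3 * z2) / (1 - 432 * z1) ^ 3 * (1 - 432 * z1) ^ 3
            = -((432 * z1) ^ 3 * z2) := div_mul_cancel₀ _ (pow_ne_zero 3 one_sub_z1_ne)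
        calc ι (φ p) * (-((432 * z1) ^ 3 * z2) / (1 - 432 * z1) ^ 3)
              * (1 - 432 * z1) ^ (3 * (e + 1))
            = (ι (φ p) * (1 - 432 * z1) ^ (3 * e))
              * (-((432 * z1) ^ 3 * z2) / (1 - 432 * z1) ^ 3 * (1 - 432 * z1) ^ 3) := by ring
          _ = φ T * -((432 * z1) ^ 3 * z2) := by rw [hT, hcancel]
          _ = φ (T * (-((432 * X 0) ^ 3 * X 1))) := by
              rw [map_mul, map_neg, map_mul, map_pow, map_mul]
              simp only [map_ofNat]
              rfl

end NoPoleAux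

open NoPoleAux

/-- If `f = Σₙ fₙ` with `fₙ ∈ V₂^{(g,m,n)}` has no pole along `Δ₂ = 0`
(i.e. `f·Δ₁^{2g−2}` is a polynomial), then `f` itself is a polynomial of `z₁`-degree at most
`m − 6(g−1)`; in particular `f = 0` whenever `m < 6(g−1)`. -/
theorem no_pole_implies_polynomial (ι : K2 →ₐ[ℂ] K2)
    (h1 : ι z1 = 1 / 432 - z1)
    (h2 : ι z2 = -((432 * z1) ^ 3 * z2) / (1 - 432 * z1) ^ 3)
    (g : ℤ) (hg : 2 ≤ g) (m : ℕ)
    (f : K2) (F : ℕ → K2) (N : ℕ)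
    (hF : ∀ n : ℕ, F n ∈ V2 ι g m n)
    (hsum : f = ∑ n ∈ Finset.range N, F n)
    (hpole : ∃ p : MvPolynomial (Fin 2) ℂ,
      f * Δ1 ^ (2 * g - 2) = algebraMap (MvPolynomial (Fin 2) ℂ) K2 p) :
    (∃ p : MvPolynomial (Fin 2) ℂ,
       f = algebraMap (MvPolynomial (Fin 2) ℂ) K2 p ∧
       (p ≠ 0 → (p.degreeOf 0 : ℤ) ≤ (m : ℤ) - 6 * (g - 1))) ∧
    ((m : ℤ) < 6 * (g - 1) → f = 0) := by
  obtain ⟨p0, hp0⟩ := hpole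
  set w : ℕ := (2 * g - 2).toNat with hwdef
  have hw : (2 * g - 2 : ℤ) = (w : ℤ) := (Int.toNat_of_nonneg (by omega)).symm
  -- Step A : clearing all poles
  obtain ⟨q, hqdeg, hAq⟩ := stepA g m f F N
    (fun n => (Submodule.mem_inf.mp ((Submodule.mem_inf.mp (hF n)).1)).1) hsum
  rw [hw, zpow_natCast] at hAq hp0
  have hAq2 : f * (φ (d1 ^ w) * φ (d2 ^ w)) = φ q := by
    rw [map_pow, map_pow, phi_d1, phi_d2, ← mul_pow]
    exact hAq
  have hp0' : f * φ (d1 ^ w) = φ p0 := by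
    rw [map_pow, phi_d1]
    exact hp0
  -- q = p0 * d2 ^ w
  have hqeq : q = p0 * d2 ^ w := by
    apply phi_inj
    rw [map_mul, ← hAq2, ← hp0']
    ring
  -- the functional equation
  set ε : ℂ := (-1 : ℂ) ^ (g - 1) with hεdef
  have hεne : ε ≠ 0 := zpow_ne_zero _ (by norm_num)
  have hfe : ι f = φ (C ε) * f := by
    have hsm : ∀ n, ι (F n) = ε • F n := by
      intro n
      have hker := (Submodule.mem_inf.mp (hF n)).2
      rw [LinearMap.mem_ker, LinearMap.sub_apply, LinearMap.smul_apply, LinearMap.id_apply,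
        sub_eq_zero] at hker
      exact hker
    have hsm2 : ∀ n, ι (F n) = algebraMap ℂ K2 ε * F n :=
      fun n => (hsm n).trans (Algebra.smul_def ε (F n))
    have hkey : ι f = algebraMap ℂ K2 ε * f := by
      calc ι f = ∑ n ∈ Finset.range N, ι (F n) := by rw [hsum, map_sum]
        _ = ∑ n ∈ Finset.range N, algebraMap ℂ K2 ε * F n :=
            Finset.sum_congr rfl (fun n _ => hsm2 n)
        _ = algebraMap ℂ K2 ε * ∑ n ∈ Finset.range N, F n := (Finset.mul_sum _ _ _).symm
        _ = algebraMap ℂ K2 ε * f := by rw [← hsum]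
    rw [hkey, phi_C]
  -- ι Δ1 = (432 z1)^3 Δ2
  have hι1 : ι Δ1 = (432 * z1) ^ 3 * Δ2 := by
    have hmap : ι Δ1 = (1 - 432 * ι z1) ^ 3 - 27 * (432 * ι z1) ^ 3 * ι z2 := by
      rw [Δ1]
      simp [map_sub, map_mul, map_pow, map_one, map_ofNat]
    rw [hmap, h1, h2, Δ2]
    field_simp [one_sub_z1_ne]
    ring
  -- apply ι to hp0'
  have h5 : ι f * ((432 * z1) ^ 3 * Δ2) ^ w = ι (φ p0) := by
    have := congrArg ι hp0'
    rw [map_mul] at this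
    have h6 : φ (d1 ^ w) = Δ1 ^ w := by rw [map_pow, phi_d1]
    rw [h6, map_pow, hι1] at this
    exact this
  obtain ⟨T, dd, hT⟩ := denom_clear ι h1 h2 p0
  -- the polynomial identity
  have key : φ (C ε * (p0 * (((432 * X 0) ^ 3 * d2) ^ w * (1 - 432 * X 0) ^ (3 * dd))))
      = φ (T * d1 ^ w) := by
    have e1 : φ (C ε * (p0 * (((432 * X 0) ^ 3 * d2) ^ w * (1 - 432 * X 0) ^ (3 * dd))))
        = φ (C ε) * (φ p0 * (((432 * z1) ^ 3 * Δ2) ^ w * (1 - 432 * z1) ^ (3 * dd))) := by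
      simp only [map_mul, map_pow, map_ofNat, phi_d2, phi_one_sub]
      rfl
    have e2 : φ (T * d1 ^ w) = φ T * Δ1 ^ w := by rw [map_mul, map_pow, phi_d1]
    rw [e1, e2, ← hT, ← h5, hfe, ← hp0', map_pow, phi_d1]
    ring
  have hpoly : C ε * (p0 * (((432 * X 0) ^ 3 * d2) ^ w * (1 - 432 * X 0) ^ (3 * dd)))
      = T * d1 ^ w := phi_inj key
  -- divisibility
  have hdvd : d1 ^ w ∣ p0 * (C ε * (((432 * X 0) ^ 3 * d2) ^ w * (1 - 432 * X 0) ^ (3 * dd))) :=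
    ⟨T, by linear_combination hpoly⟩
  have hrp : IsRelPrime (d1 ^ w)
      (C ε * (((432 * X 0) ^ 3 * d2) ^ w * (1 - 432 * X 0) ^ (3 * dd))) := by
    apply IsRelPrime.pow_left
    exact ((isUnit_C_ne hεne).isRelPrime_right).mul_right
      (((((isUnit_432.isRelPrime_right).mul_right rX0).pow_right).mul_right rd2).pow_right.mul_right
        (rsub.pow_right))
  obtain ⟨U, hU⟩ := hrp.dvd_of_dvd_mul_right hdvd
  -- f is the polynomial U
  have hD1w_ne : φ (d1 ^ w) ≠ 0 := phi_ne (pow_ne_zero _ d1_ne)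
  have hfU : f = φ U := by
    apply mul_left_cancel₀ hD1w_ne
    rw [show φ (d1 ^ w) * f = f * φ (d1 ^ w) from mul_comm _ _, hp0', hU, map_mul]
  have hqU : q = d1 ^ w * U * d2 ^ w := by rw [hqeq, hU]
  -- the degree bound
  have bound : U ≠ 0 → 3 * w + degreeOf 0 U ≤ m := by
    intro hUne
    have hmapne : ∀ x : Rp, x ≠ 0 → finSuccEquiv ℂ 1 x ≠ 0 := by
      intro x hx h
      exact hx ((finSuccEquiv ℂ 1).injective (h.trans (map_zero _).symm))
    have h1n : finSuccEquiv ℂ 1 q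
        = (finSuccEquiv ℂ 1 d1) ^ w * finSuccEquiv ℂ 1 U * (finSuccEquiv ℂ 1 d2) ^ w := by
      rw [hqU, map_mul, map_mul, map_pow, map_pow]
    have hnd : (finSuccEquiv ℂ 1 q).natDegree = 3 * w + degreeOf 0 U := by
      rw [h1n, Polynomial.natDegree_mul
          (mul_ne_zero (pow_ne_zero _ (hmapne d1 d1_ne)) (hmapne U hUne))
          (pow_ne_zero _ (hmapne d2 d2_ne)),
        Polynomial.natDegree_mul (pow_ne_zero _ (hmapne d1 d1_ne)) (hmapne U hUne),
        Polynomial.natDegree_pow, Polynomial.natDegree_pow, e0_d1_natDegree,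
        e0_d2, Polynomial.natDegree_C, natDegree_finSuccEquiv]
      ring
    have := natDegree_finSuccEquiv q
    rw [hnd] at this
    omega
  constructor
  · refine ⟨U, hfU, ?_⟩
    intro hUne
    have hb := bound hUne
    have hb' : (3 * w + degreeOf 0 U : ℤ) ≤ (m : ℤ) := by exact_mod_cast hb
    omega
  · intro hm
    by_cases hUz : U = 0
    · rw [hfU, hUz, map_zero]
    · exfalso
      have hb := bound hUz
      have hb' : (3 * w + degreeOf 0 U : ℤ) ≤ (m : ℤ) := by exact_mod_cast hb
      omega

end
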